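/- arXiv:2405.06518 — 3 statements merged into one kernel-verified Lean document; each statement's English description precedes it below -/
import Mathlib

section
/- Let M' > 0 and let a ∈ (0, πM']. Let ω : ℝ² → ℝ be measurable with |ω(y)| ≤ M' for almost every y and ∫_{ℝ²} |ω(y)| dy ≤ a. Then for every x ∈ ℝ², ∫_{|y−x|<1} log(1/|x−y|) |ω(y)| dy ≤ (a/2)(log(πM'/a) + 1). -/
open MeasureTheory Real
open scoped RealInnerProductSpace

/-- The plane `ℝ²` with the Euclidean norm. -/
abbrev E2 := EuclideanSpace ℝ (Fin 2)

open Classical in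
/-- The two-dimensional Biot–Savart kernel
`K(x) = (1/(2π)) (−x₂, x₁)/|x|²`, with `K(0) = 0`. -/
noncomputable def K (x : E2) : E2 :=
  if x = 0 then 0
  else (2 * Real.pi * ‖x‖ ^ 2)⁻¹ • (WithLp.equiv 2 (Fin 2 → ℝ)).symm ![-(x 1), x 0]

open Set in
lemma lint_log_aux (x : E2) {r : ℝ} (hr : 0 < r) :
    ∫⁻ y : E2, ENNReal.ofReal (max (Real.log (r / ‖y - x‖)) 0) =
      ENNReal.ofReal (Real.pi * r ^ 2 / 2) := by
  have hmeas : Measurable fun y : E2 => max (Real.log (r / ‖y - x‖)) 0 :=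
    ((measurable_const.div ((measurable_id.sub measurable_const).norm)).log).max
      measurable_const
  rw [lintegral_eq_lintegral_meas_lt (f := fun y : E2 => max (Real.log (r / ‖y - x‖)) 0) volume
    (Filter.Eventually.of_forall fun y => le_max_right _ _) hmeas.aemeasurable]
  have key : ∀ t : ℝ, t ∈ Ioi (0:ℝ) → volume {y : E2 | t < max (Real.log (r / ‖y - x‖)) 0}
      = ENNReal.ofReal (Real.pi * r ^ 2 * Real.exp (-2 * t)) := by
    intro t ht
    have ht0 : (0:ℝ) < t := ht
    have hset : {y : E2 | t < max (Real.log (r / ‖y - x‖)) 0}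
        = Metric.ball x (r * Real.exp (-t)) \ {x} := by
      ext y
      simp only [mem_setOf_eq, mem_diff, Metric.mem_ball, mem_singleton_iff, dist_eq_norm]
      constructor
      · intro h
        have hlog : t < Real.log (r / ‖y - x‖) := by
          rcases lt_max_iff.mp h with h' | h'
          · exact h'
          · linarith
        have hyx : y ≠ x := by
          intro hxy
          rw [hxy, sub_self, norm_zero, div_zero, Real.log_zero] at hlog
          linarith
        have hs : 0 < ‖y - x‖ := by
          rw [norm_pos_iff]; exact sub_ne_zero.mpr hyx
        have h2 : Real.exp t < r / ‖y - x‖ :=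
          (Real.lt_log_iff_exp_lt (div_pos hr hs)).mp hlog
        have h3 : Real.exp t * ‖y - x‖ < r := (lt_div_iff₀ hs).mp h2
        refine ⟨?_, hyx⟩
        rw [Real.exp_neg, mul_comm r, ← div_eq_inv_mul, lt_div_iff₀ (Real.exp_pos t)]
        linarith
      · rintro ⟨hball, hyx⟩
        have hs : 0 < ‖y - x‖ := by
          rw [norm_pos_iff]; exact sub_ne_zero.mpr hyx
        have h3 : Real.exp t * ‖y - x‖ < r := by
          rw [Real.exp_neg, mul_comm r, ← div_eq_inv_mul] at hball
          have := (lt_div_iff₀ (Real.exp_pos t)).mp hball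
          linarith
        have h2 : Real.exp t < r / ‖y - x‖ := (lt_div_iff₀ hs).mpr (by linarith)
        exact lt_max_iff.mpr (Or.inl ((Real.lt_log_iff_exp_lt (div_pos hr hs)).mpr h2))
    rw [hset, measure_diff_null (measure_singleton x), EuclideanSpace.volume_ball,
      Fintype.card_fin]
    have hG : Real.Gamma (((2:ℕ):ℝ) / 2 + 1) = 1 := by
      have h2 : ((2:ℕ):ℝ) / 2 + 1 = 1 + 1 := by norm_num
      rw [h2, Real.Gamma_add_one one_ne_zero, Real.Gamma_one, mul_one]
    have hexp : Real.exp (-t) ^ 2 = Real.exp (-2 * t) := by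
      rw [sq, ← Real.exp_add]; ring_nf
    rw [hG, div_one, Real.sq_sqrt Real.pi_nonneg,
      ← ENNReal.ofReal_pow (by positivity), ← ENNReal.ofReal_mul (by positivity)]
    congr 1
    rw [mul_pow, hexp]; ring
  rw [setLIntegral_congr_fun measurableSet_Ioi key]
  have hint : IntegrableOn (fun t : ℝ => Real.pi * r ^ 2 * Real.exp (-2 * t)) (Ioi 0) :=
    (exp_neg_integrableOn_Ioi 0 two_pos).const_mul _
  rw [← ofReal_integral_eq_lintegral_ofReal hint
    (Filter.Eventually.of_forall fun t => by positivity)]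
  congr 1
  rw [MeasureTheory.integral_const_mul]
  have hI : (∫ t in Ioi (0:ℝ), Real.exp (-2 * t)) = 1 / 2 := by
    have := integral_comp_mul_left_Ioi (fun s : ℝ => Real.exp (-s)) 0 two_pos
    simp only [mul_zero, neg_mul] at this ⊢
    rw [this, integral_exp_neg_Ioi, neg_zero, Real.exp_zero, smul_eq_mul]
    norm_num
  rw [hI]; ring

/-- Rearrangement bound for the logarithmic singularity. -/
theorem stmt2 (M' a : ℝ) (hM : 0 < M') (ha : 0 < a) (haM : a ≤ Real.pi * M')
    (ω : E2 → ℝ) (hmeas : Measurable ω)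
    (hbdd : ∀ᵐ y, |ω y| ≤ M') (hint : Integrable ω)
    (hmass : (∫ y, |ω y|) ≤ a) :
    ∀ x : E2, (∫ y in {y : E2 | ‖y - x‖ < 1}, Real.log (1 / ‖x - y‖) * |ω y|) ≤
      a / 2 * (Real.log (Real.pi * M' / a) + 1) := by
  intro x
  have hπM : 0 < Real.pi * M' := mul_pos Real.pi_pos hM
  set r : ℝ := Real.sqrt (a / (Real.pi * M')) with hr_def
  have hr_pos : 0 < r := Real.sqrt_pos.mpr (div_pos ha hπM)
  have hr_sq : r ^ 2 = a / (Real.pi * M') := Real.sq_sqrt (div_pos ha hπM).le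
  have hlogr : Real.log (1 / r) = Real.log (Real.pi * M' / a) / 2 := by
    rw [one_div, Real.log_inv, hr_def, Real.log_sqrt (div_pos ha hπM).le,
      Real.log_div ha.ne' hπM.ne', Real.log_div hπM.ne' ha.ne']
    ring
  have hL_nonneg : 0 ≤ Real.log (Real.pi * M' / a) :=
    Real.log_nonneg ((one_le_div ha).mpr haM)
  have hlogr_nonneg : 0 ≤ Real.log (1 / r) := by rw [hlogr]; linarith
  set φ : E2 → ℝ := fun y => max (Real.log (r / ‖y - x‖)) 0 with hφ_def
  have hφ_meas : Measurable φ :=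
    ((measurable_const.div ((measurable_id.sub measurable_const).norm)).log).max
      measurable_const
  have hφ_nonneg : ∀ y, 0 ≤ φ y := fun y => le_max_right _ _
  have hφ_lint : ∫⁻ y, ENNReal.ofReal (φ y) = ENNReal.ofReal (Real.pi * r ^ 2 / 2) :=
    lint_log_aux x hr_pos
  have hφ_int : Integrable φ := by
    refine ⟨hφ_meas.aestronglyMeasurable, ?_⟩
    rw [hasFiniteIntegral_iff_ofReal (Filter.Eventually.of_forall hφ_nonneg), hφ_lint]
    exact ENNReal.ofReal_lt_top
  have hφ_integral : (∫ y, φ y) = Real.pi * r ^ 2 / 2 := by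
    rw [integral_eq_lintegral_of_nonneg_ae (Filter.Eventually.of_forall hφ_nonneg)
      hφ_meas.aestronglyMeasurable, hφ_lint, ENNReal.toReal_ofReal (by positivity)]
  have hS : {y : E2 | ‖y - x‖ < 1} = Metric.ball x 1 := by
    ext y; simp [Metric.mem_ball, dist_eq_norm]
  rw [hS]
  have hmono : (∫ y in Metric.ball x 1, Real.log (1 / ‖x - y‖) * |ω y|)
      ≤ ∫ y in Metric.ball x 1, (Real.log (1 / r) * |ω y| + M' * φ y) := by
    refine integral_mono_of_nonneg ?_
      (((hint.abs.const_mul _).add (hφ_int.const_mul M')).restrict) ?_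
    · filter_upwards [ae_restrict_mem measurableSet_ball] with y hy
      refine mul_nonneg ?_ (abs_nonneg _)
      rcases eq_or_ne (‖x - y‖) 0 with h0 | h0
      · simp [h0]
      · have hpos : 0 < ‖x - y‖ := lt_of_le_of_ne (norm_nonneg _) (Ne.symm h0)
        have h1 : ‖x - y‖ < 1 := by
          rw [norm_sub_rev]
          simpa [dist_eq_norm] using hy
        exact Real.log_nonneg ((one_le_div hpos).mpr (by linarith))
    · filter_upwards [ae_restrict_of_ae hbdd, ae_restrict_mem measurableSet_ball]
        with y hb _
      rcases eq_or_ne (‖x - y‖) 0 with h0 | h0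
      · have : Real.log (1 / ‖x - y‖) = 0 := by simp [h0]
        rw [this, zero_mul]
        have := hφ_nonneg y
        have := abs_nonneg (ω y)
        positivity
      · have hpos : 0 < ‖x - y‖ := lt_of_le_of_ne (norm_nonneg _) (Ne.symm h0)
        have hkey : Real.log (1 / ‖x - y‖) ≤ Real.log (1 / r) + φ y := by
          have hid : Real.log (1 / ‖x - y‖)
              = Real.log (1 / r) + Real.log (r / ‖x - y‖) := by
            rw [one_div, one_div, Real.log_inv, Real.log_inv,
              Real.log_div hr_pos.ne' h0]
            ring
          rw [hid]
          have hle : Real.log (r / ‖x - y‖) ≤ φ y := by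
            rw [hφ_def]
            simp only [norm_sub_rev y x]
            exact le_max_left _ _
          linarith
        calc Real.log (1 / ‖x - y‖) * |ω y|
            ≤ (Real.log (1 / r) + φ y) * |ω y| :=
              mul_le_mul_of_nonneg_right hkey (abs_nonneg _)
          _ = Real.log (1 / r) * |ω y| + φ y * |ω y| := by ring
          _ ≤ Real.log (1 / r) * |ω y| + M' * φ y := by
              have h1 : φ y * |ω y| ≤ φ y * M' :=
                mul_le_mul_of_nonneg_left hb (hφ_nonneg y)
              have h2 : φ y * M' = M' * φ y := mul_comm _ _
              linarith
  have hsplit : (∫ y in Metric.ball x 1, (Real.log (1 / r) * |ω y| + M' * φ y))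
      = Real.log (1 / r) * (∫ y in Metric.ball x 1, |ω y|)
        + M' * ∫ y in Metric.ball x 1, φ y := by
    rw [integral_add ((hint.abs.const_mul _).restrict) ((hφ_int.const_mul M').restrict),
      MeasureTheory.integral_const_mul, MeasureTheory.integral_const_mul]
  have b1 : (∫ y in Metric.ball x 1, |ω y|) ≤ a :=
    (setIntegral_le_integral hint.abs
      (Filter.Eventually.of_forall fun y => abs_nonneg _)).trans hmass
  have b2 : (∫ y in Metric.ball x 1, φ y) ≤ Real.pi * r ^ 2 / 2 :=
    le_of_le_of_eq (setIntegral_le_integral hφ_int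
      (Filter.Eventually.of_forall hφ_nonneg)) hφ_integral
  have hfinal : Real.log (1 / r) * a + M' * (Real.pi * r ^ 2 / 2)
      = a / 2 * (Real.log (Real.pi * M' / a) + 1) := by
    rw [hlogr, hr_sq]
    field_simp
  calc (∫ y in Metric.ball x 1, Real.log (1 / ‖x - y‖) * |ω y|)
      ≤ Real.log (1 / r) * (∫ y in Metric.ball x 1, |ω y|)
        + M' * ∫ y in Metric.ball x 1, φ y := hmono.trans_eq hsplit
    _ ≤ Real.log (1 / r) * a + M' * (Real.pi * r ^ 2 / 2) :=
        add_le_add (mul_le_mul_of_nonneg_left b1 hlogr_nonneg)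
          (mul_le_mul_of_nonneg_left b2 hM.le)
    _ = a / 2 * (Real.log (Real.pi * M' / a) + 1) := hfinal
end

section
/- There exists a universal constant C > 0 with the following property. Let B ∈ ℝ², R > 0, ρ > 0 with R ≥ 4ρ, and let ω : ℝ² → [0, ∞) be measurable with support contained in the closed ball of center B and radius R, finite total mass, ∫_{ℝ²} (y − B) ω(y) dy = 0, and moment of inertia I = ∫_{ℝ²} |y − B|² ω(y) dy < ∞. Then for every x ∈ ℝ² with R − ρ/2 ≤ |x − B| ≤ R one has | ((x−B)/|x−B|) · ∫_{|y−B| ≤ R−ρ} K(x−y) ω(y) dy | ≤ C I / ρ³. -/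
open MeasureTheory Real
open scoped RealInnerProductSpace

noncomputable def Jf (z : E2) : E2 := (WithLp.equiv 2 (Fin 2 → ℝ)).symm ![-(z 1), z 0]

lemma inner_Jf (a z : E2) : ⟪a, Jf z⟫ = a 0 * (-(z 1)) + a 1 * z 0 := by
  simp [Jf, PiLp.inner_apply, Fin.sum_univ_two]
  ring

lemma norm_Jf (z : E2) : ‖Jf z‖ = ‖z‖ := by
  simp [Jf, EuclideanSpace.norm_eq, Fin.sum_univ_two]
  ring_nf

lemma Jf_sub (a b : E2) : Jf (a - b) = Jf a - Jf b := by
  ext i; fin_cases i <;> simp [Jf] <;> ring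

lemma inner_self_Jf (z : E2) : ⟪z, Jf z⟫ = 0 := by
  rw [inner_Jf]; ring

lemma continuous_Jf : Continuous Jf := by
  unfold Jf
  apply Continuous.comp (PiLp.continuous_toLp 2 (fun _ : Fin 2 => ℝ))
  apply continuous_pi
  intro i
  fin_cases i
  · exact (continuous_apply (1 : Fin 2)).comp (PiLp.continuous_ofLp 2 (fun _ : Fin 2 => ℝ)) |>.neg
  · exact (continuous_apply (0 : Fin 2)).comp (PiLp.continuous_ofLp 2 (fun _ : Fin 2 => ℝ))

lemma measurable_Jf : Measurable Jf := continuous_Jf.measurable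

noncomputable def JL : E2 →L[ℝ] E2 := LinearMap.toContinuousLinearMap
  { toFun := Jf
    map_add' := by intro a b; ext i; fin_cases i <;> simp [Jf] <;> ring
    map_smul' := by intro c a; ext i; fin_cases i <;> simp [Jf] <;> ring }

lemma JL_apply (z : E2) : JL z = Jf z := rfl

lemma measurable_K : Measurable K := by
  unfold K
  apply Measurable.ite (measurableSet_eq_fun measurable_id measurable_const)
  · exact measurable_const
  · exact ((continuous_const.mul (continuous_norm.pow 2)).measurable.inv).smul measurable_Jf

lemma K_eq (z : E2) (hz : z ≠ 0) : K z = (2 * Real.pi * ‖z‖ ^ 2)⁻¹ • Jf z := by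
  rw [K, if_neg hz]; rfl

lemma norm_K (z : E2) (hz : z ≠ 0) : ‖K z‖ = (2 * Real.pi * ‖z‖)⁻¹ := by
  have hzn : 0 < ‖z‖ := norm_pos_iff.mpr hz
  rw [K_eq z hz, norm_smul, norm_Jf, Real.norm_eq_abs, abs_of_nonneg (by positivity)]
  have hπ : (0:ℝ) < π := Real.pi_pos
  field_simp


lemma aux1 (ρ R d s r : ℝ) (hρ : 0 < ρ) (hRρ : 4 * ρ ≤ R) (hx1 : R - ρ / 2 ≤ d)
    (hx2 : d ≤ R) (hr0 : 0 ≤ r) (hrle : r ≤ R - ρ) (hs1 : ρ / 2 ≤ s)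
    (htri1 : s ≤ d + r) (htri2 : d ≤ s + r) :
    |(2 * π * s ^ 2)⁻¹ - (2 * π * d ^ 2)⁻¹| ≤ r / ρ ^ 3 := by
  have hπ : (3:ℝ) < π := by have := Real.pi_gt_d6; linarith
  have hdpos : 0 < d := by linarith
  have hs0 : 0 < s := by linarith
  have heq : (2 * π * s ^ 2)⁻¹ - (2 * π * d ^ 2)⁻¹
      = (d ^ 2 - s ^ 2) / (2 * π * s ^ 2 * d ^ 2) := by
    field_simp
  rw [heq, abs_div, abs_of_nonneg (by positivity : (0:ℝ) ≤ 2 * π * s ^ 2 * d ^ 2)]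
  have hnum : |d ^ 2 - s ^ 2| ≤ r * (d + s) := by
    have h1 : |d - s| ≤ r := by
      rw [abs_le]; constructor <;> linarith
    have he2 : d ^ 2 - s ^ 2 = (d - s) * (d + s) := by ring
    rw [he2, abs_mul, abs_of_nonneg (by linarith : (0:ℝ) ≤ d + s)]
    exact mul_le_mul_of_nonneg_right h1 (by linarith)
  have hmain : (d + s) * ρ ^ 3 ≤ 2 * π * s ^ 2 * d ^ 2 := by
    have hs2 : ρ ^ 2 / 4 ≤ s ^ 2 := by nlinarith
    have hds : d + s ≤ 4 * d := by linarith
    have t1 : 6 * s ^ 2 * d ^ 2 ≤ 2 * π * s ^ 2 * d ^ 2 := by nlinarith [sq_nonneg (s * d)]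
    have t2 : 6 * (ρ ^ 2 / 4) * d ^ 2 ≤ 6 * s ^ 2 * d ^ 2 := by nlinarith [sq_nonneg d]
    have hd72 : 7/2 * ρ ≤ d := by linarith
    have hq : 4 * ρ ≤ 3/2 * d := by linarith
    have t3 : 4 * d * ρ ^ 3 ≤ 6 * (ρ ^ 2 / 4) * d ^ 2 := by
      have := mul_le_mul_of_nonneg_right hq (show (0:ℝ) ≤ ρ ^ 2 * d by positivity)
      nlinarith [this]
    have t4 : (d + s) * ρ ^ 3 ≤ 4 * d * ρ ^ 3 := by nlinarith [mul_nonneg (mul_nonneg hρ.le hρ.le) hρ.le]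
    linarith
  calc |d ^ 2 - s ^ 2| / (2 * π * s ^ 2 * d ^ 2)
      ≤ (r * (d + s)) / (2 * π * s ^ 2 * d ^ 2) :=
        div_le_div₀ (by positivity) hnum (by positivity) le_rfl
    _ ≤ r / ρ ^ 3 := by
        rw [div_le_div_iff₀ (by positivity) (by positivity)]
        calc r * (d + s) * ρ ^ 3 = r * ((d + s) * ρ ^ 3) := by ring
          _ ≤ r * (2 * π * s ^ 2 * d ^ 2) := mul_le_mul_of_nonneg_left hmain hr0

lemma abs_integral_le {α : Type*} [MeasurableSpace α] {μ : MeasureTheory.Measure α}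
    (f : α → ℝ) : |∫ y, f y ∂μ| ≤ ∫ y, |f y| ∂μ := by
  simpa [Real.norm_eq_abs] using norm_integral_le_integral_norm (μ := μ) f

lemma aux2 (ρ d r w : ℝ) (hρ : 0 < ρ) (hd : 7/2 * ρ ≤ d) (hr : 3 * ρ ≤ r) (hw : 0 ≤ w) :
    (2 * π * d ^ 2)⁻¹ * (w * r) ≤ (ρ ^ 3)⁻¹ * (r ^ 2 * w) := by
  have hπ : (3:ℝ) < π := by have := Real.pi_gt_d6; linarith
  have hdpos : 0 < d := by linarith
  have hr0 : 0 ≤ r := by linarith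
  have e1 : (ρ:ℝ) ^ 2 ≤ 2 * π * d ^ 2 := by nlinarith
  have e2 : (2 * π * d ^ 2)⁻¹ ≤ (ρ ^ 2)⁻¹ := inv_anti₀ (by positivity) e1
  calc (2 * π * d ^ 2)⁻¹ * (w * r) ≤ (ρ ^ 2)⁻¹ * (w * r) :=
        mul_le_mul_of_nonneg_right e2 (mul_nonneg hw hr0)
    _ ≤ (ρ ^ 3)⁻¹ * (r ^ 2 * w) := by
        rw [inv_mul_eq_div, inv_mul_eq_div, div_le_div_iff₀ (by positivity) (by positivity)]
        nlinarith [mul_nonneg (mul_nonneg hw hr0) (mul_pos hρ hρ).le]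

/-- Estimate on the radial component of the self-induced velocity of a fluid
particle near the outer boundary of the vortex blob. -/
theorem stmt10 :
    ∃ C > (0:ℝ), ∀ (B : E2) (R ρ : ℝ) (ω : E2 → ℝ),
      0 < ρ → 4 * ρ ≤ R → (∀ y, 0 ≤ ω y) → Measurable ω →
      Function.support ω ⊆ Metric.closedBall B R → Integrable ω →
      Integrable (fun y => ‖y - B‖ ^ 2 * ω y) →
      (∫ y, ω y • (y - B)) = (0 : E2) →
      ∀ x : E2, R - ρ / 2 ≤ ‖x - B‖ → ‖x - B‖ ≤ R →
        |⟪(‖x - B‖)⁻¹ • (x - B), ∫ y in {y : E2 | ‖y - B‖ ≤ R - ρ}, ω y • K (x - y)⟫| ≤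
          C * (∫ y, ‖y - B‖ ^ 2 * ω y) / ρ ^ 3 := by
  refine ⟨1, one_pos, ?_⟩
  intro B R ρ ω hρ hRρ hω hmeas hsupp hint hint2 hmean x hx1 hx2
  have hπ : (3:ℝ) < π := by
    have := Real.pi_gt_d6; linarith
  have hRpos : (0:ℝ) < R := by linarith
  set d : ℝ := ‖x - B‖ with hd
  have hd78 : 7/8 * R ≤ d := by linarith
  have hd72 : 7/2 * ρ ≤ d := by linarith
  have hdpos : 0 < d := by linarith
  set u : E2 := d⁻¹ • (x - B) with hu_def
  have hu : ‖u‖ = 1 := by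
    rw [hu_def, norm_smul, Real.norm_eq_abs, abs_of_nonneg (by positivity), ← hd]
    field_simp
  set S : Set E2 := {y : E2 | ‖y - B‖ ≤ R - ρ} with hS_def
  have hS : MeasurableSet S := by
    have : S = (fun y : E2 => ‖y - B‖) ⁻¹' (Set.Iic (R - ρ)) := rfl
    rw [this]
    exact (measurable_norm.comp (measurable_id.sub measurable_const)) measurableSet_Iic
  have hsupp' : ∀ y : E2, ω y ≠ 0 → ‖y - B‖ ≤ R := by
    intro y hy
    have := hsupp hy
    rwa [Metric.mem_closedBall, dist_eq_norm] at this
  have hxy_lb : ∀ y ∈ S, ρ / 2 ≤ ‖x - y‖ := by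
    intro y hy
    have h1 : ‖y - B‖ ≤ R - ρ := hy
    have h2 : d - ‖y - B‖ ≤ ‖x - y‖ := by
      have := norm_sub_norm_le (x - B) (y - B)
      rwa [sub_sub_sub_cancel_right] at this
    linarith
  have hxy_ne : ∀ y ∈ S, x - y ≠ 0 := by
    intro y hy h0
    have := hxy_lb y hy
    rw [h0, norm_zero] at this
    linarith
  set h : E2 → ℝ := fun y => ω y * ⟪u, Jf (y - B)⟫ with hh_def
  have h_bound : ∀ y, |h y| ≤ ω y * ‖y - B‖ := by
    intro y
    rw [hh_def]
    rw [abs_mul, abs_of_nonneg (hω y)]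
    apply mul_le_mul_of_nonneg_left _ (hω y)
    calc |⟪u, Jf (y - B)⟫| ≤ ‖u‖ * ‖Jf (y - B)‖ := abs_real_inner_le_norm _ _
      _ = ‖y - B‖ := by rw [hu, norm_Jf, one_mul]
  have h_bound' : ∀ y, |h y| ≤ R * ω y := by
    intro y
    by_cases hy : ω y = 0
    · simp [hh_def, hy]
    · calc |h y| ≤ ω y * ‖y - B‖ := h_bound y
        _ ≤ ω y * R := mul_le_mul_of_nonneg_left (hsupp' y hy) (hω y)
        _ = R * ω y := mul_comm _ _
  have h_meas : Measurable h := by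
    apply hmeas.mul
    exact (Continuous.measurable
      (continuous_const.inner (continuous_Jf.comp (continuous_id.sub continuous_const))))
  have hI_h : Integrable h := by
    refine Integrable.mono' (hint.const_mul R) h_meas.aestronglyMeasurable ?_
    filter_upwards with y
    rw [Real.norm_eq_abs]
    exact h_bound' y
  have hI_vec : Integrable (fun y => ω y • (y - B)) := by
    refine Integrable.mono' (hint.const_mul R)
      (hmeas.aestronglyMeasurable.smul
        ((measurable_id.sub measurable_const).aestronglyMeasurable)) ?_
    filter_upwards with y
    rw [norm_smul, Real.norm_eq_abs, abs_of_nonneg (hω y)]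
    by_cases hy : ω y = 0
    · simp [hy]
    · exact (mul_le_mul_of_nonneg_left (hsupp' y hy) (hω y)).trans_eq (mul_comm _ _)
  have h_total : ∫ y, h y = 0 := by
    have h1 : Integrable (fun y => JL (ω y • (y - B))) := JL.integrable_comp hI_vec
    have heq : ∀ y, h y = ⟪u, JL (ω y • (y - B))⟫ := by
      intro y
      rw [hh_def]
      rw [_root_.map_smul, real_inner_smul_right, JL_apply]
    simp only [heq]
    calc ∫ y, ⟪u, JL (ω y • (y - B))⟫ = ⟪u, ∫ y, JL (ω y • (y - B))⟫ := integral_inner h1 u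
      _ = ⟪u, JL (∫ y, ω y • (y - B))⟫ := by rw [JL.integral_comp_comm hI_vec]
      _ = 0 := by rw [hmean, map_zero, inner_zero_right]
  have hK_meas : Measurable fun y : E2 => ω y • K (x - y) :=
    hmeas.smul (measurable_K.comp (measurable_const.sub measurable_id))
  have hKint : IntegrableOn (fun y => ω y • K (x - y)) S := by
    refine Integrable.mono' ((hint.const_mul ((π * ρ)⁻¹)).integrableOn)
      hK_meas.aestronglyMeasurable.restrict ?_
    rw [ae_restrict_iff' hS]
    filter_upwards with y hy
    rw [norm_smul, Real.norm_eq_abs, abs_of_nonneg (hω y), norm_K _ (hxy_ne y hy),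
      mul_comm ((π * ρ)⁻¹)]
    apply mul_le_mul_of_nonneg_left _ (hω y)
    have h1 := hxy_lb y hy
    have h2 : 0 < ‖x - y‖ := by linarith
    rw [inv_le_inv₀ (by positivity) (by positivity)]
    nlinarith
  have step1 : ⟪u, ∫ y in S, ω y • K (x - y)⟫ = ∫ y in S, ω y * ⟪u, K (x - y)⟫ := by
    rw [← integral_inner hKint u]
    simp_rw [real_inner_smul_right]
  have step2 : ∫ y in S, ω y * ⟪u, K (x - y)⟫
      = ∫ y in S, (-(h y) * (2 * π * ‖x - y‖ ^ 2)⁻¹) := by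
    apply setIntegral_congr_fun hS
    intro y hy
    dsimp only
    have hne := hxy_ne y hy
    rw [K_eq _ hne, real_inner_smul_right]
    have hJ : ⟪u, Jf (x - y)⟫ = -⟪u, Jf (y - B)⟫ := by
      have hxy : x - y = (x - B) - (y - B) := by abel
      rw [hxy, Jf_sub, inner_sub_right]
      have h0 : ⟪u, Jf (x - B)⟫ = 0 := by
        rw [hu_def, real_inner_smul_left, inner_self_Jf, mul_zero]
      rw [h0]; ring
    rw [hJ, hh_def]
    ring
  set c : ℝ := (2 * π * d ^ 2)⁻¹ with hc_def
  have hc_pos : 0 < c := by rw [hc_def]; positivity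
  set F : E2 → ℝ := fun y => -(h y) * ((2 * π * ‖x - y‖ ^ 2)⁻¹ - c) with hF_def
  set g : E2 → ℝ := fun y => (ρ ^ 3)⁻¹ * (‖y - B‖ ^ 2 * ω y) with hg_def
  have hg_int : Integrable g := hint2.const_mul _
  -- pointwise bound for F on S
  have hF_bound : ∀ y ∈ S, |F y| ≤ g y := by
    intro y hy
    have hr0 : (0:ℝ) ≤ ‖y - B‖ := norm_nonneg _
    have hrle : ‖y - B‖ ≤ R - ρ := hy
    have hs1 : ρ / 2 ≤ ‖x - y‖ := hxy_lb y hy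
    have htri1 : ‖x - y‖ ≤ d + ‖y - B‖ := by
      have he : x - y = (x - B) - (y - B) := by abel
      calc ‖x - y‖ = ‖(x - B) - (y - B)‖ := by rw [he]
        _ ≤ d + ‖y - B‖ := norm_sub_le _ _
    have htri2 : d ≤ ‖x - y‖ + ‖y - B‖ := by
      have he : x - B = (x - y) + (y - B) := by abel
      calc d = ‖(x - y) + (y - B)‖ := by rw [hd, he]
        _ ≤ ‖x - y‖ + ‖y - B‖ := norm_add_le _ _
    have key : |(2 * π * ‖x - y‖ ^ 2)⁻¹ - c| ≤ ‖y - B‖ / ρ ^ 3 := by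
      rw [hc_def]
      exact aux1 ρ R d ‖x - y‖ ‖y - B‖ hρ hRρ hx1 hx2 hr0 hrle hs1 htri1 htri2
    have hFy : |F y| = |h y| * |(2 * π * ‖x - y‖ ^ 2)⁻¹ - c| := by
      rw [hF_def]
      dsimp only
      rw [abs_mul, abs_neg]
    calc |F y| = |h y| * |(2 * π * ‖x - y‖ ^ 2)⁻¹ - c| := hFy
      _ ≤ (ω y * ‖y - B‖) * (‖y - B‖ / ρ ^ 3) :=
        mul_le_mul (h_bound y) key (abs_nonneg _) (mul_nonneg (hω y) (norm_nonneg _))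
      _ = g y := by
        rw [hg_def]
        dsimp only
        field_simp
  -- pointwise bound on the complement
  have hcompl_ptbound : ∀ y ∈ Sᶜ, c * |h y| ≤ g y := by
    intro y hy
    have hr0 : (0:ℝ) ≤ ‖y - B‖ := norm_nonneg _
    have hrgt : R - ρ < ‖y - B‖ := not_le.mp hy
    by_cases h0 : ω y = 0
    · simp [hh_def, h0, hg_def]
    · have hrR : ‖y - B‖ ≤ R := hsupp' y h0
      have hr3 : 3 * ρ ≤ ‖y - B‖ := by linarith
      calc c * |h y| ≤ c * (ω y * ‖y - B‖) :=
            mul_le_mul_of_nonneg_left (h_bound y) hc_pos.le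
        _ ≤ (ρ ^ 3)⁻¹ * (‖y - B‖ ^ 2 * ω y) := by
            rw [hc_def]
            exact aux2 ρ d ‖y - B‖ (ω y) hρ hd72 hr3 (hω y)
        _ = g y := by rw [hg_def]
  -- measurability / integrability of F
  have hF_meas : Measurable F := by
    apply (h_meas.neg).mul
    apply Measurable.sub _ measurable_const
    apply Measurable.inv
    exact (continuous_const.mul ((continuous_const.sub continuous_id).norm.pow 2)).measurable
  have hF_int : IntegrableOn F S := by
    refine Integrable.mono' hg_int.integrableOn hF_meas.aestronglyMeasurable.restrict ?_
    rw [ae_restrict_iff' hS]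
    filter_upwards with y hy
    rw [Real.norm_eq_abs]
    exact hF_bound y hy
  -- split the integral
  have hsplit : ∫ y in S, (-(h y) * (2 * π * ‖x - y‖ ^ 2)⁻¹)
      = (∫ y in S, F y) + c * ∫ y in Sᶜ, h y := by
    have split_eq : ∀ y : E2, -(h y) * (2 * π * ‖x - y‖ ^ 2)⁻¹ = F y + (-c) * h y := by
      intro y; rw [hF_def]; ring
    simp only [split_eq]
    rw [integral_add hF_int ((hI_h.integrableOn).const_mul (-c))]
    congr 1
    rw [integral_const_mul]
    have hcompl : (∫ y in S, h y) + ∫ y in Sᶜ, h y = ∫ y, h y := integral_add_compl hS hI_h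
    have : ∫ y in S, h y = - ∫ y in Sᶜ, h y := by
      rw [h_total] at hcompl; linarith
    rw [this]; ring
  -- bound the two terms
  have bound1 : |∫ y in S, F y| ≤ ∫ y in S, g y := by
    calc |∫ y in S, F y| ≤ ∫ y in S, |F y| := abs_integral_le _
      _ ≤ ∫ y in S, g y := by
          apply setIntegral_mono_on hF_int.abs hg_int.integrableOn hS
          exact hF_bound
  have bound2 : |c * ∫ y in Sᶜ, h y| ≤ ∫ y in Sᶜ, g y := by
    rw [abs_mul, abs_of_nonneg hc_pos.le]
    calc c * |∫ y in Sᶜ, h y| ≤ c * ∫ y in Sᶜ, |h y| :=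
          mul_le_mul_of_nonneg_left (abs_integral_le _) hc_pos.le
      _ = ∫ y in Sᶜ, c * |h y| := (integral_const_mul _ _).symm
      _ ≤ ∫ y in Sᶜ, g y := by
          apply setIntegral_mono_on ((hI_h.abs.integrableOn).const_mul c)
            hg_int.integrableOn hS.compl
          exact hcompl_ptbound
  -- assemble
  have hgsum : (∫ y in S, g y) + ∫ y in Sᶜ, g y = ∫ y, g y := integral_add_compl hS hg_int
  have hgval : ∫ y, g y = (ρ ^ 3)⁻¹ * ∫ y, ‖y - B‖ ^ 2 * ω y := by
    rw [hg_def, integral_const_mul]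
  rw [step1, step2, hsplit]
  calc |(∫ y in S, F y) + c * ∫ y in Sᶜ, h y|
      ≤ |∫ y in S, F y| + |c * ∫ y in Sᶜ, h y| := abs_add_le _ _
    _ ≤ (∫ y in S, g y) + ∫ y in Sᶜ, g y := add_le_add bound1 bound2
    _ = (ρ ^ 3)⁻¹ * ∫ y, ‖y - B‖ ^ 2 * ω y := by rw [hgsum, hgval]
    _ = 1 * (∫ y, ‖y - B‖ ^ 2 * ω y) / ρ ^ 3 := by
        rw [one_mul, inv_mul_eq_div]
end

section
/- Let B ∈ ℝ², let R ≥ 2h > 0 and C_W > 1, and let W : ℝ² → ℝ be a continuously differentiable radial function (i.e. W(z) = w(|z|) for some function w) with W(z) = 1 for |z| ≤ R, W(z) = 0 for |z| ≥ R + h, |∇W(z)| ≤ C_W/h for all z, and |∇W(z) − ∇W(z')| ≤ (C_W/h²)|z − z'| for all z, z'. Let ω : ℝ² → [0, ∞) be bounded, measurable, compactly supported, with ∫_{ℝ²} (y − B) ω(y) dy = 0, moment of inertia I = ∫_{ℝ²} |y − B|² ω(y) dy, and tail mass m(R) = ∫_{|y−B| > R} ω(y) dy. Then |(1/2) ∫_{ℝ²}∫_{ℝ²}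 [∇W(x−B) − ∇W(y−B)] · K(x−y) ω(x) ω(y) dx dy| ≤ (4 C_W/π) (1/(R³h) + 1/(R²h²)) I m(R). -/
open MeasureTheory Real
open scoped RealInnerProductSpace

noncomputable def jj (x : E2) : E2 := (WithLp.equiv 2 (Fin 2 → ℝ)).symm ![-(x 1), x 0]

@[simp] lemma jj_apply0 (x : E2) : jj x 0 = -(x 1) := by simp [jj]
@[simp] lemma jj_apply1 (x : E2) : jj x 1 = x 0 := by simp [jj]

lemma inner_E2 (x y : E2) : ⟪x, y⟫ = x 0 * y 0 + x 1 * y 1 := by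
  simp [PiLp.inner_apply, Fin.sum_univ_two, mul_comm]

lemma norm_jj (x : E2) : ‖jj x‖ = ‖x‖ := by
  simp [EuclideanSpace.norm_eq, Fin.sum_univ_two]
  ring_nf

lemma jj_sub (x y : E2) : jj (x - y) = jj x - jj y := by
  ext i
  fin_cases i <;> simp [jj] <;> ring

lemma inner_jj_self (x : E2) : ⟪x, jj x⟫ = 0 := by
  rw [inner_E2]; simp; ring

lemma inner_jj_le (v u : E2) : |⟪v, jj u⟫| ≤ ‖v‖ * ‖u‖ := by
  calc |⟪v, jj u⟫| ≤ ‖v‖ * ‖jj u‖ := abs_real_inner_le_norm v (jj u)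
  _ = ‖v‖ * ‖u‖ := by rw [norm_jj]

lemma inner_jj_swap (v u : E2) : ⟪v, jj u⟫ = ⟪-(jj v), u⟫ := by
  rw [inner_E2, inner_E2]; simp; ring

lemma K_def (x : E2) (hx : x ≠ 0) : K x = (2 * Real.pi * ‖x‖ ^ 2)⁻¹ • jj x := by
  rw [K, if_neg hx]; rfl

@[simp] lemma K_zero : K 0 = 0 := by rw [K, if_pos rfl]

lemma inner_K (v x : E2) (hx : x ≠ 0) : ⟪v, K x⟫ = (2 * Real.pi * ‖x‖ ^ 2)⁻¹ * ⟪v, jj x⟫ := by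
  rw [K_def x hx, real_inner_smul_right]

lemma norm_K_le (x : E2) : ‖K x‖ ≤ (2 * Real.pi * ‖x‖)⁻¹ := by
  rcases eq_or_ne x 0 with rfl | hx
  · simp
  · rw [K_def x hx, norm_smul, norm_jj]
    have h0 : 0 < ‖x‖ := norm_pos_iff.mpr hx
    have : |(2 * Real.pi * ‖x‖ ^ 2)⁻¹| = (2 * Real.pi * ‖x‖ ^ 2)⁻¹ := by
      rw [abs_of_nonneg]; positivity
    rw [Real.norm_eq_abs, this, pow_two]
    rw [mul_comm ((2 * Real.pi * (‖x‖*‖x‖))⁻¹) (‖x‖)]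
    rw [inv_eq_one_div, inv_eq_one_div, mul_one_div, div_le_div_iff₀ (by positivity) (by positivity)]
    ring_nf
    exact le_refl _

lemma grad_inner' (W : E2 → ℝ) (z v : E2) : ⟪gradient W z, v⟫ = fderiv ℝ W z v := by
  rw [gradient]; exact InnerProductSpace.toDual_symm_apply

lemma grad_perp (W : E2 → ℝ) (hW1 : ContDiff ℝ 1 W)
    (hrad : ∃ w : ℝ → ℝ, ∀ z : E2, W z = w ‖z‖) (z v : E2) (hzv : ⟪z, v⟫ = 0) :
    ⟪gradient W z, v⟫ = 0 := by
  obtain ⟨w, hw⟩ := hrad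
  set d : ℝ := fderiv ℝ W z v with hd
  set φ : ℝ → ℝ := fun t => W (z + t • v) with hφ
  have hcurve : HasDerivAt (fun t : ℝ => z + t • v) v 0 := by
    simpa using ((hasDerivAt_id (0:ℝ)).smul_const v).const_add z
  have hWd : HasFDerivAt W (fderiv ℝ W z) z :=
    (hW1.differentiable one_ne_zero z).hasFDerivAt
  have hWd' : HasFDerivAt W (fderiv ℝ W z) (z + (0:ℝ) • v) := by simpa using hWd
  have h1 : HasDerivAt φ d 0 := by
    exact hWd'.comp_hasDerivAt 0 hcurve
  have heven : ∀ t : ℝ, φ (-t) = φ t := by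
    intro t
    have : ‖z + (-t) • v‖ = ‖z + t • v‖ := by
      have e1 : ‖z + (-t) • v‖ ^ 2 = ‖z + t • v‖ ^ 2 := by
        rw [norm_add_sq_real, norm_add_sq_real, real_inner_smul_right, real_inner_smul_right,
          hzv, norm_smul, norm_smul]
        simp
      nlinarith [norm_nonneg (z + (-t) • v), norm_nonneg (z + t • v)]
    simp only [hφ, hw]
    rw [this]
  have h2 : HasDerivAt (fun t => φ (-t)) (-d) 0 := by
    have h1' : HasDerivAt φ d (-(0:ℝ)) := by simpa using h1
    have := h1'.comp 0 (hasDerivAt_neg (0:ℝ))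
    exact (by simpa using this : HasDerivAt (φ ∘ Neg.neg) (-d) 0)
  have h2' : HasDerivAt φ (-d) 0 := by
    have : (fun t => φ (-t)) = φ := funext heven
    rwa [this] at h2
  have : d = -d := h1.unique h2'
  have hd0 : d = 0 := by linarith
  rw [grad_inner', ← hd, hd0]

lemma continuous_jj : Continuous jj := by
  unfold jj
  refine (PiLp.continuous_toLp (p := 2) (β := fun _ : Fin 2 => ℝ)).comp ?_
  refine continuous_pi fun i => ?_
  fin_cases i
  · simp
    exact ((continuous_apply (1 : Fin 2)).comp
      (PiLp.continuous_ofLp (p := 2) (β := fun _ : Fin 2 => ℝ))).neg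
  · simpa [Function.comp_def] using (continuous_apply (0 : Fin 2)).comp
      (PiLp.continuous_ofLp (p := 2) (β := fun _ : Fin 2 => ℝ))

lemma continuous_grad (W : E2 → ℝ) (hW1 : ContDiff ℝ 1 W) : Continuous (gradient W) := by
  have : Continuous (fderiv ℝ W) := hW1.continuous_fderiv one_ne_zero
  exact (InnerProductSpace.toDual ℝ E2).symm.continuous.comp this

-- integrability of ω-weighted functions
lemma integrable_omega_smul {F : Type*} [NormedAddCommGroup F] [NormedSpace ℝ F]
    [MeasurableSpace F] [BorelSpace F] [SecondCountableTopology F] (ω : E2 → ℝ) (hmeas : Measurable ω)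
    (M : ℝ) (hb : ∀ y, |ω y| ≤ M) (hsupp : HasCompactSupport ω)
    (φ : E2 → F) (hφ : Measurable φ) (C : ℝ) (hloc : ∀ y ∈ tsupport ω, ‖φ y‖ ≤ C) :
    Integrable (fun y => ω y • φ y) := by
  have hM : 0 ≤ M := le_trans (abs_nonneg _) (hb 0)
  set s := tsupport ω with hs
  have hsc : IsCompact s := hsupp
  have hmeas_s : MeasurableSet s := hsc.isClosed.measurableSet
  have hgint : Integrable (s.indicator fun _ => M * |C|) := by
    rw [integrable_indicator_iff hmeas_s]
    exact integrableOn_const hsc.measure_lt_top.ne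
  refine Integrable.mono' hgint ((hmeas.smul hφ).aestronglyMeasurable) ?_
  refine Filter.Eventually.of_forall fun y => ?_
  rcases em (y ∈ s) with hy | hy
  · rw [Set.indicator_of_mem hy]
    rw [norm_smul]
    have h1 : ‖ω y‖ ≤ M := by rw [Real.norm_eq_abs]; exact hb y
    have h2 : ‖φ y‖ ≤ |C| := (hloc y hy).trans (le_abs_self C)
    exact mul_le_mul h1 h2 (norm_nonneg _) hM
  · rw [Set.indicator_of_notMem hy, image_eq_zero_of_notMem_tsupport hy]
    simp

lemma grad_zero_of_const_on_open' (W : E2 → ℝ) (c : ℝ) (s : Set E2) (hs : IsOpen s)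
    (hc : ∀ z ∈ s, W z = c) (z : E2) (hz : z ∈ s) : gradient W z = 0 := by
  have hev : W =ᶠ[nhds z] fun _ => c := by
    filter_upwards [hs.mem_nhds hz] with a ha using hc a ha
  rw [gradient, hev.fderiv_eq, fderiv_fun_const]
  simp

lemma mem_closure_norm_gt (r : ℝ) (hr : 0 < r) (z : E2) (hz : r ≤ ‖z‖) :
    z ∈ closure {x : E2 | r < ‖x‖} := by
  have hz0 : 0 < ‖z‖ := lt_of_lt_of_le hr hz
  rw [Metric.mem_closure_iff]
  intro ε hε
  refine ⟨(1 + ε / (2 * ‖z‖)) • z, ?_, ?_⟩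
  · have h1 : (1:ℝ) < 1 + ε / (2 * ‖z‖) := by
      have : 0 < ε / (2 * ‖z‖) := by positivity
      linarith
    have : ‖(1 + ε / (2 * ‖z‖)) • z‖ = (1 + ε / (2 * ‖z‖)) * ‖z‖ := by
      rw [norm_smul, Real.norm_eq_abs, abs_of_pos (by linarith)]
    rw [Set.mem_setOf_eq, this]
    calc r ≤ ‖z‖ := hz
    _ = 1 * ‖z‖ := (one_mul _).symm
    _ < (1 + ε / (2 * ‖z‖)) * ‖z‖ := by
        exact mul_lt_mul_of_pos_right h1 hz0
  · rw [dist_eq_norm]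
    have : z - (1 + ε / (2 * ‖z‖)) • z = (-(ε / (2 * ‖z‖))) • z := by
      module
    rw [this, norm_smul, Real.norm_eq_abs, abs_neg, abs_of_pos (by positivity)]
    rw [div_mul_eq_mul_div, mul_comm]
    rw [div_lt_iff₀ (by positivity)]
    nlinarith

lemma grad_zero_closure' (W : E2 → ℝ) (L : ℝ) (hL : 0 < L)
    (hgrad_lip : ∀ z z' : E2, ‖gradient W z - gradient W z'‖ ≤ L * ‖z - z'‖)
    (s : Set E2) (hz0 : ∀ z ∈ s, gradient W z = 0) (z : E2) (hz : z ∈ closure s) :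
    gradient W z = 0 := by
  have key : ∀ ε > 0, ‖gradient W z‖ ≤ L * ε := by
    intro ε hε
    obtain ⟨z', hz's, hz'd⟩ := Metric.mem_closure_iff.mp hz ε hε
    have h2 := hgrad_lip z z'
    rw [hz0 z' hz's, sub_zero] at h2
    refine h2.trans ?_
    rw [← dist_eq_norm]
    exact mul_le_mul_of_nonneg_left hz'd.le hL.le
  by_contra hne
  have hpos : 0 < ‖gradient W z‖ := by
    rcases (norm_nonneg (gradient W z)).lt_or_eq with h | h
    · exact h
    · exact absurd (norm_eq_zero.mp h.symm) hne
  have := key (‖gradient W z‖ / (2 * L)) (by positivity)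
  have heq : L * (‖gradient W z‖ / (2 * L)) = ‖gradient W z‖ / 2 := by
    field_simp
  rw [heq] at this
  linarith

lemma gradW_zero (R h C_W : ℝ) (hh : 0 < h) (hR : 0 < R) (hCW : 0 < C_W)
    (W : E2 → ℝ)
    (hWin : ∀ z : E2, ‖z‖ ≤ R → W z = 1) (hWout : ∀ z : E2, R + h ≤ ‖z‖ → W z = 0)
    (hgrad_lip : ∀ z z' : E2, ‖gradient W z - gradient W z'‖ ≤ C_W / h ^ 2 * ‖z - z'‖)
    (z : E2) (hz : ‖z‖ ≤ R ∨ R + h ≤ ‖z‖) : gradient W z = 0 := by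
  have hL : 0 < C_W / h ^ 2 := by positivity
  rcases hz with hz | hz
  · have hzero : ∀ x ∈ Metric.ball (0:E2) R, gradient W x = 0 := by
      intro x hx
      refine grad_zero_of_const_on_open' W 1 (Metric.ball 0 R) Metric.isOpen_ball ?_ x hx
      intro y hy
      exact hWin y (by rw [mem_ball_zero_iff] at hy; exact hy.le)
    refine grad_zero_closure' W _ hL hgrad_lip _ hzero z ?_
    rw [closure_ball (0:E2) hR.ne']
    simpa [Metric.mem_closedBall, dist_zero_right] using hz
  · have hzero : ∀ x ∈ {x : E2 | R + h < ‖x‖}, gradient W x = 0 := by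
      intro x hx
      refine grad_zero_of_const_on_open' W 0 _ ?_ ?_ x hx
      · have : {x : E2 | R + h < ‖x‖} = (fun x : E2 => ‖x‖) ⁻¹' (Set.Ioi (R + h)) := rfl
        rw [this]
        exact isOpen_Ioi.preimage continuous_norm
      · intro y hy
        exact hWout y (le_of_lt hy)
    exact grad_zero_closure' W _ hL hgrad_lip _ hzero z
      (mem_closure_norm_gt (R + h) (by linarith) z hz)

-- bound |⟪v, K z⟫| ≤ L/(2π) when ‖v‖ ≤ L‖z‖
lemma abs_inner_K_le (v z : E2) (L : ℝ) (hL : 0 ≤ L) (hv : ‖v‖ ≤ L * ‖z‖) :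
    |⟪v, K z⟫| ≤ L / (2 * Real.pi) := by
  rcases eq_or_ne z 0 with rfl | hz
  · simp
    positivity
  · have h0 : 0 < ‖z‖ := norm_pos_iff.mpr hz
    calc |⟪v, K z⟫| ≤ ‖v‖ * ‖K z‖ := abs_real_inner_le_norm _ _
    _ ≤ (L * ‖z‖) * (2 * Real.pi * ‖z‖)⁻¹ := by
        refine mul_le_mul hv (norm_K_le z) (norm_nonneg _) (by positivity)
    _ = L / (2 * Real.pi) := by
        field_simp
lemma abs_int {α : Type*} [MeasurableSpace α] (μ : MeasureTheory.Measure α) (f : α → ℝ) :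
    |∫ a, f a ∂μ| ≤ ∫ a, |f a| ∂μ := by
  simpa [Real.norm_eq_abs] using norm_integral_le_integral_norm (μ := μ) f

set_option maxHeartbeats 2000000 in
lemma core_bound (B : E2) (R h C_W : ℝ) (hh : 0 < h) (hRh : 2 * h ≤ R) (hCW : 1 < C_W)
    (W : E2 → ℝ) (hW1 : ContDiff ℝ 1 W) (hrad : ∃ w : ℝ → ℝ, ∀ z : E2, W z = w ‖z‖)
    (hWin : ∀ z : E2, ‖z‖ ≤ R → W z = 1) (hWout : ∀ z : E2, R + h ≤ ‖z‖ → W z = 0)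
    (hgrad_bd : ∀ z : E2, ‖gradient W z‖ ≤ C_W / h)
    (hgrad_lip : ∀ z z' : E2, ‖gradient W z - gradient W z'‖ ≤ C_W / h ^ 2 * ‖z - z'‖)
    (ω : E2 → ℝ) (hnn : ∀ y, 0 ≤ ω y) (hmeas : Measurable ω)
    (M : ℝ) (hM : ∀ y, ω y ≤ M) (hsupp : HasCompactSupport ω)
    (hcen : (∫ y, ω y • (y - B)) = (0 : E2))
    (x : E2) (hx1 : R < ‖x - B‖) (hx2 : ‖x - B‖ < R + h)
    (c : E2 → ℝ) (hc : Measurable c) (hc1 : ∀ y, |c y| ≤ 1)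
    (hcF : ∀ y : E2, ‖y - B‖ < R → c y = 1) :
    |∫ y, ω y * ⟪gradient W (x - B) - gradient W (y - B), K (x - y)⟫ * c y| ≤
      2 * C_W / (Real.pi * h ^ 2 * R ^ 2) * (∫ y, ‖y - B‖ ^ 2 * ω y) +
      6 * C_W / (Real.pi * h * R ^ 3) * (∫ y, ‖y - B‖ ^ 2 * ω y) := by
  have hR : 0 < R := by linarith
  have hCW0 : 0 < C_W := by linarith
  have hπ : 0 < Real.pi := Real.pi_pos
  set r : ℝ := ‖x - B‖ with hrdef
  have hr0 : 0 < r := lt_trans hR hx1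
  set ga : E2 := gradient W (x - B) with hgadef
  set Iqf : E2 → ℝ := fun y => ‖y - B‖ ^ 2 * ω y with hIqf
  have hIq0 : 0 ≤ ∫ y, Iqf y :=
    integral_nonneg fun y => mul_nonneg (by positivity) (hnn y)
  set Iq : ℝ := ∫ y, Iqf y with hIqdef
  have hgz : ∀ z : E2, ‖z‖ ≤ R ∨ R + h ≤ ‖z‖ → gradient W z = 0 :=
    gradW_zero R h C_W hh hR hCW0 W hWin hWout hgrad_lip
  have hMnn : 0 ≤ M := le_trans (hnn 0) (hM 0)
  have habs : ∀ y, |ω y| ≤ M := fun y => by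
    rw [abs_of_nonneg (hnn y)]; exact hM y
  set gf : E2 → ℝ := fun y => ⟪gradient W (x - B) - gradient W (y - B), K (x - y)⟫ with hgfdef
  have hgf_bd : ∀ y, |gf y| ≤ C_W / h ^ 2 / (2 * Real.pi) := by
    intro y
    refine abs_inner_K_le _ _ (C_W / h ^ 2) (by positivity) ?_
    have heq : (x - B) - (y - B) = x - y := sub_sub_sub_cancel_right x y B
    calc ‖gradient W (x - B) - gradient W (y - B)‖
        ≤ C_W / h ^ 2 * ‖(x - B) - (y - B)‖ := hgrad_lip _ _
      _ = C_W / h ^ 2 * ‖x - y‖ := by rw [heq]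
  have hgrad_cont : Continuous (gradient W) := continuous_grad W hW1
  have hgf_meas : Measurable gf := by
    apply Measurable.inner
    · exact measurable_const.sub
        (hgrad_cont.measurable.comp (measurable_id.sub measurable_const))
    · exact measurable_K.comp (measurable_const.sub measurable_id)
  have hsc : IsCompact (tsupport ω) := hsupp
  obtain ⟨Cs, hCs⟩ : ∃ Cs, ∀ y ∈ tsupport ω, ‖y - B‖ ≤ Cs := by
    obtain ⟨Cs, hCs⟩ := hsc.exists_bound_of_continuousOn
      (Continuous.continuousOn (f := fun y : E2 => y - B)
        (continuous_id.sub continuous_const))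
    exact ⟨Cs, fun y hy => hCs y hy⟩
  have hIω : Integrable ω := by
    have := integrable_omega_smul ω hmeas M habs hsupp (fun _ => (1:ℝ))
      measurable_const 1 (fun y _ => by simp)
    simpa using this
  have hIqint : Integrable Iqf := by
    have h2 := integrable_omega_smul ω hmeas M habs hsupp (fun y => ‖y - B‖ ^ 2)
      (((continuous_norm.comp (continuous_id.sub continuous_const)).pow 2).measurable)
      (Cs ^ 2) (fun y hy => by
        rw [Real.norm_eq_abs, abs_of_nonneg (by positivity)]
        have h3 := hCs y hy
        exact pow_le_pow_left₀ (norm_nonneg _) h3 2)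
    refine h2.congr (Filter.Eventually.of_forall fun y => ?_)
    simp [hIqf, smul_eq_mul, mul_comm]
  have hIu : Integrable (fun y => ω y • (y - B)) :=
    integrable_omega_smul ω hmeas M habs hsupp (fun y => y - B)
      (measurable_id.sub measurable_const) Cs hCs
  have hIf : Integrable (fun y => ω y * gf y * c y) := by
    have h2 := integrable_omega_smul ω hmeas M habs hsupp (fun y => gf y * c y)
      (hgf_meas.mul hc) (C_W / h ^ 2 / (2 * Real.pi)) (fun y _ => by
        rw [Real.norm_eq_abs, abs_mul]
        calc |gf y| * |c y| ≤ C_W / h ^ 2 / (2 * Real.pi) * 1 :=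
              mul_le_mul (hgf_bd y) (hc1 y) (abs_nonneg _) (by positivity)
          _ = C_W / h ^ 2 / (2 * Real.pi) := mul_one _)
    refine h2.congr (Filter.Eventually.of_forall fun y => ?_)
    simp [smul_eq_mul, mul_assoc]
  set N : Set E2 := {y : E2 | r / 2 < ‖y - B‖} with hNdef
  have measN : MeasurableSet N := by
    have he : N = (fun y : E2 => ‖y - B‖) ⁻¹' Set.Ioi (r / 2) := rfl
    rw [he]
    exact (isOpen_Ioi.preimage
      (continuous_norm.comp (continuous_id.sub continuous_const))).measurableSet
  have hsplit : (∫ y, ω y * gf y * c y)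
      = (∫ y in N, ω y * gf y * c y) + ∫ y in Nᶜ, ω y * gf y * c y :=
    (integral_add_compl measN hIf).symm
  -- Part N
  have hNbound : |∫ y in N, ω y * gf y * c y|
      ≤ 2 * C_W / (Real.pi * h ^ 2 * r ^ 2) * Iq := by
    have hpt : ∀ y ∈ N, |ω y * gf y * c y|
        ≤ 2 * C_W / (Real.pi * h ^ 2 * r ^ 2) * Iqf y := by
      intro y hy
      have hyN : r / 2 < ‖y - B‖ := hy
      have h1 : |ω y * gf y * c y| ≤ ω y * (C_W / h ^ 2 / (2 * Real.pi)) := by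
        rw [abs_mul, abs_mul, abs_of_nonneg (hnn y)]
        calc ω y * |gf y| * |c y| ≤ ω y * (C_W / h ^ 2 / (2 * Real.pi)) * 1 :=
              mul_le_mul (mul_le_mul_of_nonneg_left (hgf_bd y) (hnn y)) (hc1 y)
                (abs_nonneg _) (mul_nonneg (hnn y) (by positivity))
          _ = ω y * (C_W / h ^ 2 / (2 * Real.pi)) := mul_one _
      refine h1.trans ?_
      have hkey : C_W / h ^ 2 / (2 * Real.pi)
          ≤ 2 * C_W / (Real.pi * h ^ 2 * r ^ 2) * ‖y - B‖ ^ 2 := by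
        have h2 : r ^ 2 / 4 ≤ ‖y - B‖ ^ 2 := by nlinarith
        calc C_W / h ^ 2 / (2 * Real.pi)
            = 2 * C_W / (Real.pi * h ^ 2 * r ^ 2) * (r ^ 2 / 4) := by
              field_simp; ring
          _ ≤ 2 * C_W / (Real.pi * h ^ 2 * r ^ 2) * ‖y - B‖ ^ 2 :=
              mul_le_mul_of_nonneg_left h2 (by positivity)
      calc ω y * (C_W / h ^ 2 / (2 * Real.pi))
          ≤ ω y * (2 * C_W / (Real.pi * h ^ 2 * r ^ 2) * ‖y - B‖ ^ 2) :=
            mul_le_mul_of_nonneg_left hkey (hnn y)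
        _ = 2 * C_W / (Real.pi * h ^ 2 * r ^ 2) * Iqf y := by
            simp only [hIqf]; ring
    calc |∫ y in N, ω y * gf y * c y| ≤ ∫ y in N, |ω y * gf y * c y| :=
          abs_int _ _
      _ ≤ ∫ y in N, 2 * C_W / (Real.pi * h ^ 2 * r ^ 2) * Iqf y :=
          setIntegral_mono_on hIf.abs.integrableOn
            ((hIqint.const_mul _).integrableOn) measN hpt
      _ = 2 * C_W / (Real.pi * h ^ 2 * r ^ 2) * ∫ y in N, Iqf y := by
          rw [integral_const_mul]
      _ ≤ 2 * C_W / (Real.pi * h ^ 2 * r ^ 2) * Iq := by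
          refine mul_le_mul_of_nonneg_left ?_ (by positivity)
          exact setIntegral_le_integral hIqint
            (Filter.Eventually.of_forall fun y =>
              mul_nonneg (by positivity) (hnn y))
  -- Part F (the near region Nᶜ)
  have hNc : ∀ y : E2, y ∈ Nᶜ → ‖y - B‖ ≤ r / 2 := by
    intro y hy
    have : ¬ (r / 2 < ‖y - B‖) := hy
    linarith [not_lt.mp this]
  have hxylb : ∀ y : E2, ‖y - B‖ ≤ r / 2 → r / 2 ≤ ‖x - y‖ := by
    intro y hy
    have heq : x - y = (x - B) - (y - B) := (sub_sub_sub_cancel_right x y B).symm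
    rw [heq]
    have h2 := norm_sub_norm_le (x - B) (y - B)
    have h3 : ‖x - B‖ = r := rfl
    linarith
  have hbigR : r / 2 < R := by linarith
  set t1 : E2 → ℝ := fun y => ((‖x - y‖ ^ 2)⁻¹ - (r ^ 2)⁻¹) * (ω y * ⟪ga, jj (y - B)⟫)
    with ht1def
  set t2 : E2 → ℝ := fun y => (r ^ 2)⁻¹ * (ω y * ⟪ga, jj (y - B)⟫) with ht2def
  have hga_bd : ‖ga‖ ≤ C_W / h := hgrad_bd (x - B)
  have hinner_bd : ∀ y : E2, |⟪ga, jj (y - B)⟫| ≤ C_W / h * ‖y - B‖ := by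
    intro y
    refine (inner_jj_le ga (y - B)).trans ?_
    exact mul_le_mul_of_nonneg_right hga_bd (norm_nonneg _)
  -- pointwise identity on Nᶜ
  have hFpt : ∀ y ∈ Nᶜ, ω y * gf y * c y = (2 * Real.pi)⁻¹ * (-(t1 y + t2 y)) := by
    intro y hy
    have hu2 : ‖y - B‖ ≤ r / 2 := hNc y hy
    have huR : ‖y - B‖ < R := lt_of_le_of_lt hu2 hbigR
    have hcy : c y = 1 := hcF y huR
    have hgy : gradient W (y - B) = 0 := hgz _ (Or.inl huR.le)
    have hxy0 : x - y ≠ 0 := by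
      have h2 := hxylb y hu2
      intro hcon
      rw [hcon, norm_zero] at h2
      linarith
    have heq : (x - B) - (y - B) = x - y := sub_sub_sub_cancel_right x y B
    have hKinner : gf y = (2 * Real.pi * ‖x - y‖ ^ 2)⁻¹ * (-⟪ga, jj (y - B)⟫) := by
      simp only [hgfdef]
      rw [hgy, sub_zero, inner_K _ (x - y) hxy0]
      congr 1
      rw [← heq, jj_sub, inner_sub_right,
        grad_perp W hW1 hrad (x - B) (jj (x - B)) (inner_jj_self (x - B))]
      ring
    rw [hKinner, hcy, mul_one]
    have h2π : (2 * Real.pi * ‖x - y‖ ^ 2)⁻¹ = (2 * Real.pi)⁻¹ * (‖x - y‖ ^ 2)⁻¹ :=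
      mul_inv _ _
    simp only [ht1def, ht2def, h2π]
    ring
  -- key inverse-difference bound
  have hkey : ∀ y : E2, ‖y - B‖ ≤ r / 2 →
      |(‖x - y‖ ^ 2)⁻¹ - (r ^ 2)⁻¹| ≤ 10 * ‖y - B‖ / r ^ 3 := by
    intro y hy
    have hA : r / 2 ≤ ‖x - y‖ := hxylb y hy
    have hA0 : 0 < ‖x - y‖ := lt_of_lt_of_le (by positivity) hA
    have hA2 : (‖x - y‖ ^ 2) ≠ 0 := by positivity
    have hr2 : (r ^ 2 : ℝ) ≠ 0 := by positivity
    rw [inv_sub_inv hA2 hr2]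
    rw [abs_div]
    have hnum : |r ^ 2 - ‖x - y‖ ^ 2| ≤ 5 / 2 * r * ‖y - B‖ := by
      have hexp : ‖x - y‖ ^ 2 = r ^ 2 - 2 * ⟪x - B, y - B⟫ + ‖y - B‖ ^ 2 := by
        have heq : x - y = (x - B) - (y - B) := (sub_sub_sub_cancel_right x y B).symm
        rw [heq, norm_sub_sq_real]
      have hip : |⟪x - B, y - B⟫| ≤ r * ‖y - B‖ := abs_real_inner_le_norm _ _
      have husq : ‖y - B‖ ^ 2 ≤ r / 2 * ‖y - B‖ := by
        nlinarith [norm_nonneg (y - B)]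
      have hsimp : r ^ 2 - ‖x - y‖ ^ 2
          = 2 * ⟪x - B, y - B⟫ - ‖y - B‖ ^ 2 := by rw [hexp]; ring
      rw [hsimp, abs_le]
      have hP := abs_le.mp hip
      have hU : (0:ℝ) ≤ ‖y - B‖ ^ 2 := by positivity
      constructor
      · linarith [hP.1, husq, hU, mul_nonneg hr0.le (norm_nonneg (y - B))]
      · linarith [hP.2, husq, hU, mul_nonneg hr0.le (norm_nonneg (y - B))]
    have hden : r ^ 4 / 4 ≤ |‖x - y‖ ^ 2 * r ^ 2| := by
      rw [abs_of_nonneg (by positivity)]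
      have h4 : (r / 2) ^ 2 ≤ ‖x - y‖ ^ 2 := pow_le_pow_left₀ (by positivity) hA 2
      have h5 : (r / 2) ^ 2 * r ^ 2 ≤ ‖x - y‖ ^ 2 * r ^ 2 :=
        mul_le_mul_of_nonneg_right h4 (by positivity)
      calc r ^ 4 / 4 = (r / 2) ^ 2 * r ^ 2 := by ring
        _ ≤ ‖x - y‖ ^ 2 * r ^ 2 := h5
    calc |r ^ 2 - ‖x - y‖ ^ 2| / |‖x - y‖ ^ 2 * r ^ 2|
        ≤ (5 / 2 * r * ‖y - B‖) / (r ^ 4 / 4) := by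
          exact div_le_div₀ (by positivity) hnum (by positivity) hden
      _ = 10 * ‖y - B‖ / r ^ 3 := by
          field_simp
          ring
  -- integrability of t1 on Nᶜ and t2
  have hI2 : Integrable t2 := by
    have h2 := integrable_omega_smul ω hmeas M habs hsupp
      (fun y => ⟪ga, jj (y - B)⟫)
      ((measurable_const.inner (continuous_jj.measurable.comp
        (measurable_id.sub measurable_const))))
      (C_W / h * Cs) (fun y hy => by
        rw [Real.norm_eq_abs]
        refine (hinner_bd y).trans ?_
        exact mul_le_mul_of_nonneg_left (hCs y hy) (by positivity))
    have h3 : Integrable (fun y => ω y * ⟪ga, jj (y - B)⟫) := by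
      refine h2.congr (Filter.Eventually.of_forall fun y => ?_)
      simp [smul_eq_mul]
    simpa only [ht2def] using h3.const_mul ((r ^ 2)⁻¹)
  have ht1meas : Measurable t1 := by
    refine Measurable.mul ?_ ?_
    · refine Measurable.sub ?_ measurable_const
      refine Measurable.inv ?_
      exact ((continuous_norm.comp (continuous_const.sub continuous_id)).pow 2).measurable
    · exact hmeas.mul (measurable_const.inner (continuous_jj.measurable.comp
        (measurable_id.sub measurable_const)))
  have ht1pt : ∀ y ∈ Nᶜ, ‖t1 y‖ ≤ 10 * C_W / (h * r ^ 3) * Iqf y := by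
    intro y hy
    have hu2 : ‖y - B‖ ≤ r / 2 := hNc y hy
    simp only [ht1def, Real.norm_eq_abs, abs_mul]
    rw [abs_of_nonneg (hnn y)]
    calc |(‖x - y‖ ^ 2)⁻¹ - (r ^ 2)⁻¹| * (ω y * |⟪ga, jj (y - B)⟫|)
        ≤ (10 * ‖y - B‖ / r ^ 3) * (ω y * (C_W / h * ‖y - B‖)) := by
          refine mul_le_mul (hkey y hu2) ?_ (mul_nonneg (hnn y) (abs_nonneg _))
            (by positivity)
          exact mul_le_mul_of_nonneg_left (hinner_bd y) (hnn y)
      _ = 10 * C_W / (h * r ^ 3) * Iqf y := by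
          simp only [hIqf]
          field_simp
  have ht1 : IntegrableOn t1 Nᶜ := by
    refine Integrable.mono' ((hIqint.const_mul (10 * C_W / (h * r ^ 3))).restrict)
      ht1meas.aestronglyMeasurable ?_
    rw [ae_restrict_iff' measN.compl]
    exact Filter.Eventually.of_forall ht1pt
  have ht2 : IntegrableOn t2 Nᶜ := hI2.integrableOn
  -- rewrite the Nᶜ integral
  have hFeq : (∫ y in Nᶜ, ω y * gf y * c y)
      = (2 * Real.pi)⁻¹ * (-((∫ y in Nᶜ, t1 y) + ∫ y in Nᶜ, t2 y)) := by
    rw [setIntegral_congr_fun measN.compl hFpt]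
    rw [integral_const_mul, integral_neg, integral_add ht1 ht2]
  -- T1 bound
  have hT1 : |∫ y in Nᶜ, t1 y| ≤ 10 * C_W / (h * r ^ 3) * Iq := by
    calc |∫ y in Nᶜ, t1 y| ≤ ∫ y in Nᶜ, |t1 y| := abs_int _ _
      _ ≤ ∫ y in Nᶜ, 10 * C_W / (h * r ^ 3) * Iqf y := by
          refine setIntegral_mono_on ht1.abs ((hIqint.const_mul _).integrableOn)
            measN.compl ?_
          intro y hy
          simpa [Real.norm_eq_abs] using ht1pt y hy
      _ = 10 * C_W / (h * r ^ 3) * ∫ y in Nᶜ, Iqf y := integral_const_mul _ _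
      _ ≤ 10 * C_W / (h * r ^ 3) * Iq := by
          refine mul_le_mul_of_nonneg_left ?_ (by positivity)
          exact setIntegral_le_integral hIqint
            (Filter.Eventually.of_forall fun y => mul_nonneg (by positivity) (hnn y))
  -- T2 bound
  have hmom : (∫ y in Nᶜ, ω y • (y - B)) = -(∫ y in N, ω y • (y - B)) := by
    have hh2 := integral_add_compl measN hIu
    rw [hcen] at hh2
    linear_combination (norm := module) hh2
  have hT2 : |∫ y in Nᶜ, t2 y| ≤ (r ^ 2)⁻¹ * (C_W / h * (2 / r * Iq)) := by
    simp only [ht2def]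
    rw [integral_const_mul, abs_mul, abs_of_nonneg (by positivity : (0:ℝ) ≤ (r ^ 2)⁻¹)]
    refine mul_le_mul_of_nonneg_left ?_ (by positivity)
    have hswap2 : ∀ y : E2, ω y * ⟪ga, jj (y - B)⟫ = ⟪-(jj ga), ω y • (y - B)⟫ := by
      intro y
      rw [inner_jj_swap ga (y - B), real_inner_smul_right]
    calc |∫ y in Nᶜ, ω y * ⟪ga, jj (y - B)⟫|
        = |⟪-(jj ga), ∫ y in Nᶜ, ω y • (y - B)⟫| := by
          rw [show (fun y => ω y * ⟪ga, jj (y - B)⟫)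
              = fun y => ⟪-(jj ga), ω y • (y - B)⟫ from funext hswap2]
          rw [integral_inner hIu.integrableOn (-(jj ga))]
      _ = |⟪-(jj ga), -(∫ y in N, ω y • (y - B))⟫| := by rw [hmom]
      _ = |⟪jj ga, ∫ y in N, ω y • (y - B)⟫| := by rw [inner_neg_neg]
      _ ≤ ‖jj ga‖ * ‖∫ y in N, ω y • (y - B)‖ := abs_real_inner_le_norm _ _
      _ ≤ C_W / h * (2 / r * Iq) := by
          refine mul_le_mul ?_ ?_ (norm_nonneg _) (by positivity)
          · rw [norm_jj]; exact hga_bd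
          · calc ‖∫ y in N, ω y • (y - B)‖ ≤ ∫ y in N, ‖ω y • (y - B)‖ :=
                norm_integral_le_integral_norm _
              _ ≤ ∫ y in N, 2 / r * Iqf y := by
                  refine setIntegral_mono_on hIu.norm.integrableOn
                    ((hIqint.const_mul _).integrableOn) measN ?_
                  intro y hy
                  have hyN : r / 2 < ‖y - B‖ := hy
                  rw [norm_smul, Real.norm_eq_abs, abs_of_nonneg (hnn y)]
                  simp only [hIqf]
                  have hkey2 : (0:ℝ) ≤ ω y * ‖y - B‖ * (2 * ‖y - B‖ - r) :=
                    mul_nonneg (mul_nonneg (hnn y) (norm_nonneg _)) (by linarith)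
                  rw [div_mul_eq_mul_div, le_div_iff₀ hr0]
                  nlinarith [hkey2]
              _ = 2 / r * ∫ y in N, Iqf y := integral_const_mul _ _
              _ ≤ 2 / r * Iq := by
                  refine mul_le_mul_of_nonneg_left ?_ (by positivity)
                  exact setIntegral_le_integral hIqint
                    (Filter.Eventually.of_forall fun y =>
                      mul_nonneg (by positivity) (hnn y))
  -- combine F part
  have hFbound : |∫ y in Nᶜ, ω y * gf y * c y| ≤ 6 * C_W / (Real.pi * h * r ^ 3) * Iq := by
    rw [hFeq, abs_mul, abs_neg,
      abs_of_nonneg (by positivity : (0:ℝ) ≤ (2 * Real.pi)⁻¹)]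
    calc (2 * Real.pi)⁻¹ * |(∫ y in Nᶜ, t1 y) + ∫ y in Nᶜ, t2 y|
        ≤ (2 * Real.pi)⁻¹ * (10 * C_W / (h * r ^ 3) * Iq
            + (r ^ 2)⁻¹ * (C_W / h * (2 / r * Iq))) := by
          refine mul_le_mul_of_nonneg_left ?_ (by positivity)
          exact (abs_add_le _ _).trans (add_le_add hT1 hT2)
      _ = 6 * C_W / (Real.pi * h * r ^ 3) * Iq := by
          field_simp
          ring
  -- final combination
  have hfin1 : 2 * C_W / (Real.pi * h ^ 2 * r ^ 2) * Iq
      ≤ 2 * C_W / (Real.pi * h ^ 2 * R ^ 2) * Iq := by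
    refine mul_le_mul_of_nonneg_right ?_ hIq0
    gcongr
  have hfin2 : 6 * C_W / (Real.pi * h * r ^ 3) * Iq
      ≤ 6 * C_W / (Real.pi * h * R ^ 3) * Iq := by
    refine mul_le_mul_of_nonneg_right ?_ hIq0
    gcongr
  rw [hsplit]
  calc |(∫ y in N, ω y * gf y * c y) + ∫ y in Nᶜ, ω y * gf y * c y|
      ≤ |∫ y in N, ω y * gf y * c y| + |∫ y in Nᶜ, ω y * gf y * c y| := abs_add_le _ _
    _ ≤ 2 * C_W / (Real.pi * h ^ 2 * r ^ 2) * Iq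
        + 6 * C_W / (Real.pi * h * r ^ 3) * Iq := add_le_add hNbound hFbound
    _ ≤ 2 * C_W / (Real.pi * h ^ 2 * R ^ 2) * Iq
        + 6 * C_W / (Real.pi * h * R ^ 3) * Iq := add_le_add hfin1 hfin2

lemma integrable_prod_aux (ω : E2 → ℝ) (hmeas : Measurable ω)
    (M : ℝ) (hb : ∀ y, |ω y| ≤ M) (hsupp : HasCompactSupport ω)
    (φ : E2 × E2 → ℝ) (hφ : Measurable φ) (G : ℝ) (hG : ∀ p, |φ p| ≤ G) :
    Integrable (fun p : E2 × E2 => ω p.1 * ω p.2 * φ p)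
      ((volume : Measure E2).prod volume) := by
  have hM : 0 ≤ M := le_trans (abs_nonneg _) (hb 0)
  have hG0 : 0 ≤ G := le_trans (abs_nonneg _) (hG (0, 0))
  set s := tsupport ω with hs
  have hsc : IsCompact s := hsupp
  have hmeas_s : MeasurableSet s := hsc.isClosed.measurableSet
  have hgint : Integrable ((s ×ˢ s).indicator fun _ => M * M * G)
      ((volume : Measure E2).prod volume) := by
    rw [integrable_indicator_iff (hmeas_s.prod hmeas_s)]
    refine integrableOn_const ?_
    rw [Measure.prod_prod]
    exact (ENNReal.mul_lt_top hsc.measure_lt_top hsc.measure_lt_top).ne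
  refine Integrable.mono' hgint ?_ ?_
  · exact (((hmeas.comp measurable_fst).mul (hmeas.comp measurable_snd)).mul
      hφ).aestronglyMeasurable
  refine Filter.Eventually.of_forall fun p => ?_
  rcases em (p.1 ∈ s ∧ p.2 ∈ s) with ⟨h1, h2⟩ | hn
  · rw [Set.indicator_of_mem (Set.mk_mem_prod h1 h2)]
    rw [Real.norm_eq_abs, abs_mul, abs_mul]
    refine mul_le_mul (mul_le_mul (hb _) (hb _) (abs_nonneg _) hM) (hG p)
      (abs_nonneg _) (by positivity)
  · rw [Set.indicator_of_notMem (by simpa [Set.mem_prod] using hn)]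
    have : ω p.1 = 0 ∨ ω p.2 = 0 := by
      rcases not_and_or.mp hn with hcase | hcase
      · exact Or.inl (image_eq_zero_of_notMem_tsupport hcase)
      · exact Or.inr (image_eq_zero_of_notMem_tsupport hcase)
    rcases this with h0 | h0 <;> simp [h0]


set_option maxHeartbeats 2000000 in
/-- Estimate on the self-interaction term `H₃` in the evolution of the mollified
tail mass of the vorticity. -/
theorem stmt11 (B : E2) (R h C_W : ℝ) (hh : 0 < h) (hRh : 2 * h ≤ R) (hCW : 1 < C_W)
    (W : E2 → ℝ) (hW1 : ContDiff ℝ 1 W) (hrad : ∃ w : ℝ → ℝ, ∀ z : E2, W z = w ‖z‖)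
    (hWin : ∀ z : E2, ‖z‖ ≤ R → W z = 1) (hWout : ∀ z : E2, R + h ≤ ‖z‖ → W z = 0)
    (hgrad_bd : ∀ z : E2, ‖gradient W z‖ ≤ C_W / h)
    (hgrad_lip : ∀ z z' : E2, ‖gradient W z - gradient W z'‖ ≤ C_W / h ^ 2 * ‖z - z'‖)
    (ω : E2 → ℝ) (hnn : ∀ y, 0 ≤ ω y) (hmeas : Measurable ω)
    (hbdd : ∃ M, ∀ y, ω y ≤ M) (hsupp : HasCompactSupport ω)
    (hcen : (∫ y, ω y • (y - B)) = (0 : E2)) :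
    |(1/2) * ∫ x, ∫ y, ω x * ω y *
        ⟪gradient W (x - B) - gradient W (y - B), K (x - y)⟫| ≤
      4 * C_W / Real.pi * (1 / (R ^ 3 * h) + 1 / (R ^ 2 * h ^ 2)) *
        (∫ y, ‖y - B‖ ^ 2 * ω y) * (∫ y in {y : E2 | R < ‖y - B‖}, ω y) := by
  obtain ⟨M, hM⟩ := hbdd
  have hR : 0 < R := by linarith
  have hCW0 : 0 < C_W := by linarith
  have hπ : 0 < Real.pi := Real.pi_pos
  have hMnn : 0 ≤ M := le_trans (hnn 0) (hM 0)
  have habs : ∀ y, |ω y| ≤ M := fun y => by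
    rw [abs_of_nonneg (hnn y)]; exact hM y
  set gf : E2 → E2 → ℝ :=
    fun x y => ⟪gradient W (x - B) - gradient W (y - B), K (x - y)⟫ with hgfdef
  have hgz : ∀ z : E2, ‖z‖ ≤ R ∨ R + h ≤ ‖z‖ → gradient W z = 0 :=
    gradW_zero R h C_W hh hR hCW0 W hWin hWout hgrad_lip
  -- symmetry of gf
  have hKneg : ∀ z : E2, K (-z) = -K z := by
    intro z
    rcases eq_or_ne z 0 with rfl | hz
    · simp
    · rw [K_def z hz, K_def (-z) (neg_ne_zero.mpr hz)]
      have : jj (-z) = -jj z := by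
        ext i; fin_cases i <;> simp [jj]
      rw [this, norm_neg, smul_neg]
  have hsymm : ∀ x y : E2, gf y x = gf x y := by
    intro x y
    simp only [hgfdef]
    have h1 : y - x = -(x - y) := by abel
    rw [h1, hKneg, inner_neg_right, ← inner_neg_left]
    congr 1
    abel
  -- global bound on gf
  set G : ℝ := C_W / h ^ 2 / (2 * Real.pi) with hGdef
  have hgf_bd : ∀ x y : E2, |gf x y| ≤ G := by
    intro x y
    refine abs_inner_K_le _ _ (C_W / h ^ 2) (by positivity) ?_
    have heq : (x - B) - (y - B) = x - y := sub_sub_sub_cancel_right x y B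
    calc ‖gradient W (x - B) - gradient W (y - B)‖
        ≤ C_W / h ^ 2 * ‖(x - B) - (y - B)‖ := hgrad_lip _ _
      _ = C_W / h ^ 2 * ‖x - y‖ := by rw [heq]
  have hgrad_cont : Continuous (gradient W) := continuous_grad W hW1
  have hgf_meas2 : Measurable (fun p : E2 × E2 => gf p.1 p.2) := by
    apply Measurable.inner
    · exact ((hgrad_cont.measurable.comp
        ((measurable_fst).sub measurable_const)).sub
        (hgrad_cont.measurable.comp ((measurable_snd).sub measurable_const)))
    · exact measurable_K.comp (measurable_fst.sub measurable_snd)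
  -- the annulus
  set A' : Set E2 := {z : E2 | R < ‖z - B‖ ∧ ‖z - B‖ < R + h} with hA'def
  have measA : MeasurableSet A' := by
    have he : A' = (fun z : E2 => ‖z - B‖) ⁻¹' (Set.Ioo R (R + h)) := rfl
    rw [he]
    exact (isOpen_Ioo.preimage
      (continuous_norm.comp (continuous_id.sub continuous_const))).measurableSet
  set χ : E2 → ℝ := A'.indicator (fun _ => 1) with hχdef
  set χ' : E2 → ℝ := A'ᶜ.indicator (fun _ => 1) with hχ'def
  have hχmeas : Measurable χ := measurable_const.indicator measA
  have hχ'meas : Measurable χ' := measurable_const.indicator measA.compl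
  have hχ_bd : ∀ y, |χ y| ≤ 1 := fun y => by
    rcases em (y ∈ A') with hy | hy <;> simp [hχdef, Set.indicator_of_mem,
      Set.indicator_of_notMem, hy]
  have hχ'_bd : ∀ y, |χ' y| ≤ 1 := fun y => by
    rcases em (y ∈ A'ᶜ) with hy | hy <;> simp [hχ'def, Set.indicator_of_mem,
      Set.indicator_of_notMem, hy]
  have hgA : ∀ x : E2, x ∉ A' → gradient W (x - B) = 0 := by
    intro x hx
    refine hgz _ ?_
    rcases not_and_or.mp hx with hc | hc
    · exact Or.inl (not_lt.mp hc)
    · exact Or.inr (not_lt.mp hc)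
  -- pointwise decomposition
  have hdec : ∀ x y : E2, ω x * ω y * gf x y
      = ω x * ω y * gf x y * χ x + ω x * ω y * gf x y * (χ' x * χ y) := by
    intro x y
    rcases em (x ∈ A') with hx | hx
    · have h1 : χ x = 1 := by simp [hχdef, Set.indicator_of_mem hx]
      have h2 : χ' x = 0 := by
        simp [hχ'def, Set.indicator_of_notMem, hx]
      rw [h1, h2]; ring
    · have h1 : χ x = 0 := by simp [hχdef, Set.indicator_of_notMem hx]
      have h2 : χ' x = 1 := by simp [hχ'def, Set.indicator_of_mem, hx]
      rcases em (y ∈ A') with hy | hy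
      · have h3 : χ y = 1 := by simp [hχdef, Set.indicator_of_mem hy]
        rw [h1, h2, h3]; ring
      · have h3 : χ y = 0 := by simp [hχdef, Set.indicator_of_notMem hy]
        have h4 : gf x y = 0 := by
          simp only [hgfdef]
          rw [hgA x hx, hgA y hy]
          simp
        rw [h4]; ring
  have hG0 : 0 ≤ G := by rw [hGdef]; positivity
  set Iqf : E2 → ℝ := fun y => ‖y - B‖ ^ 2 * ω y with hIqf
  have hIq0 : 0 ≤ ∫ y, Iqf y := integral_nonneg fun y => mul_nonneg (by positivity) (hnn y)
  set Iq : ℝ := ∫ y, Iqf y with hIqdef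
  set tail : Set E2 := {y : E2 | R < ‖y - B‖} with htaildef
  have meastail : MeasurableSet tail := by
    have he : tail = (fun z : E2 => ‖z - B‖) ⁻¹' (Set.Ioi R) := rfl
    rw [he]
    exact (isOpen_Ioi.preimage
      (continuous_norm.comp (continuous_id.sub continuous_const))).measurableSet
  have hIω : Integrable ω := by
    have h2 := integrable_omega_smul ω hmeas M habs hsupp (fun _ => (1:ℝ))
      measurable_const 1 (fun y _ => by simp)
    simpa using h2
  have hm0 : 0 ≤ ∫ y in tail, ω y := setIntegral_nonneg meastail fun y _ => hnn y
  set m : ℝ := ∫ y in tail, ω y with hmdef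
  have hAm : (∫ y in A', ω y) ≤ m := by
    refine setIntegral_mono_set hIω.integrableOn
      (Filter.Eventually.of_forall fun y => hnn y)
      (Filter.Eventually.of_forall fun y => ?_)
    intro hy
    exact hy.1
  set κ : ℝ := (2 * C_W / (Real.pi * h ^ 2 * R ^ 2)
      + 6 * C_W / (Real.pi * h * R ^ 3)) * Iq with hκdef
  have hκ0 : 0 ≤ κ := mul_nonneg (by positivity) hIq0
  -- core bounds
  have hcore1 : ∀ x ∈ A', |∫ y, ω y * gf x y| ≤ κ := by
    intro x hx
    have h2 := core_bound B R h C_W hh hRh hCW W hW1 hrad hWin hWout hgrad_bd hgrad_lip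
      ω hnn hmeas M hM hsupp hcen x hx.1 hx.2 (fun _ => 1) measurable_const
      (fun y => by norm_num) (fun y _ => rfl)
    rw [hκdef, add_mul]
    simp only [hIqdef, hIqf, hgfdef]
    simpa only [mul_one] using h2
  have hcore2 : ∀ x ∈ A', |∫ y, ω y * gf x y * χ' y| ≤ κ := by
    intro x hx
    have hc1 : ∀ y : E2, ‖y - B‖ < R → χ' y = 1 := by
      intro y hy
      have hyc : y ∈ A'ᶜ := by
        intro hy2
        exact absurd hy2.1 (not_lt.mpr hy.le)
      simp [hχ'def, Set.indicator_of_mem hyc]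
    have h2 := core_bound B R h C_W hh hRh hCW W hW1 hrad hWin hWout hgrad_bd hgrad_lip
      ω hnn hmeas M hM hsupp hcen x hx.1 hx.2 χ' hχ'meas hχ'_bd hc1
    rw [hκdef, add_mul]
    simp only [hIqdef, hIqf, hgfdef]
    simpa only [] using h2
  -- product integrability
  have hprod : ∀ (cc : E2 × E2 → ℝ), Measurable cc → (∀ p, |cc p| ≤ 1) →
      Integrable (fun p : E2 × E2 => ω p.1 * ω p.2 * gf p.1 p.2 * cc p)
        ((volume : Measure E2).prod volume) := by
    intro cc hccm hccb
    have h2 := integrable_prod_aux ω hmeas M habs hsupp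
      (fun p => gf p.1 p.2 * cc p) (hgf_meas2.mul hccm) G (fun p => by
        rw [abs_mul]
        calc |gf p.1 p.2| * |cc p| ≤ G * 1 :=
              mul_le_mul (hgf_bd _ _) (hccb p) (abs_nonneg _) hG0
          _ = G := mul_one _)
    refine h2.congr (Filter.Eventually.of_forall fun p => by ring)
  have hF1int := hprod (fun p => χ p.1) (hχmeas.comp measurable_fst)
    (fun p => hχ_bd _)
  have hF2int := hprod (fun p => χ' p.1 * χ p.2)
    ((hχ'meas.comp measurable_fst).mul (hχmeas.comp measurable_snd))
    (fun p => by
      rw [abs_mul]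
      calc |χ' p.1| * |χ p.2| ≤ 1 * 1 :=
            mul_le_mul (hχ'_bd _) (hχ_bd _) (abs_nonneg _) zero_le_one
        _ = 1 := mul_one _)
  have hΨint := hprod (fun p => χ p.1 * χ' p.2)
    ((hχmeas.comp measurable_fst).mul (hχ'meas.comp measurable_snd))
    (fun p => by
      rw [abs_mul]
      calc |χ p.1| * |χ' p.2| ≤ 1 * 1 :=
            mul_le_mul (hχ_bd _) (hχ'_bd _) (abs_nonneg _) zero_le_one
        _ = 1 := mul_one _)
  -- fiberwise integrability
  have hIfx : ∀ (x : E2) (c : E2 → ℝ), Measurable c → (∀ y, |c y| ≤ 1) →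
      Integrable (fun y => ω y * gf x y * c y) := by
    intro x c hc hcb
    have hgfm : Measurable (gf x) := by
      apply Measurable.inner
      · exact measurable_const.sub
          (hgrad_cont.measurable.comp (measurable_id.sub measurable_const))
      · exact measurable_K.comp (measurable_const.sub measurable_id)
    have h2 := integrable_omega_smul ω hmeas M habs hsupp (fun y => gf x y * c y)
      (hgfm.mul hc) G (fun y _ => by
        rw [Real.norm_eq_abs, abs_mul]
        calc |gf x y| * |c y| ≤ G * 1 :=
              mul_le_mul (hgf_bd x y) (hcb y) (abs_nonneg _) hG0
          _ = G := mul_one _)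
    refine h2.congr (Filter.Eventually.of_forall fun y => ?_)
    simp [smul_eq_mul, mul_assoc]
  -- split the double integral
  have hsplit : (∫ x, ∫ y, ω x * ω y * gf x y)
      = (∫ x, ∫ y, ω x * ω y * gf x y * χ x)
        + ∫ x, ∫ y, ω x * ω y * gf x y * (χ' x * χ y) := by
    have hstep : ∀ x : E2, (∫ y, ω x * ω y * gf x y)
        = (∫ y, ω x * ω y * gf x y * χ x)
          + ∫ y, ω x * ω y * gf x y * (χ' x * χ y) := by
      intro x
      have hint1 : Integrable (fun y => ω x * ω y * gf x y * χ x) := by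
        have h2 := (hIfx x (fun _ => 1) measurable_const (fun y => by norm_num)).const_mul
          (ω x * χ x)
        refine h2.congr (Filter.Eventually.of_forall fun y => by ring)
      have hint2 : Integrable (fun y => ω x * ω y * gf x y * (χ' x * χ y)) := by
        have h2 := (hIfx x χ hχmeas hχ_bd).const_mul (ω x * χ' x)
        refine h2.congr (Filter.Eventually.of_forall fun y => by ring)
      rw [← integral_add hint1 hint2]
      exact integral_congr_ae (Filter.Eventually.of_forall fun y => hdec x y)
    rw [integral_congr_ae (Filter.Eventually.of_forall hstep)]
    exact integral_add hF1int.integral_prod_left hF2int.integral_prod_left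
  -- swap the second piece
  have hswap : (∫ x, ∫ y, ω x * ω y * gf x y * (χ' x * χ y))
      = ∫ x, ∫ y, ω x * ω y * gf x y * (χ x * χ' y) := by
    rw [integral_integral_swap
      (f := fun x y => ω x * ω y * gf x y * (χ' x * χ y)) hF2int]
    refine integral_congr_ae (Filter.Eventually.of_forall fun a => ?_)
    refine integral_congr_ae (Filter.Eventually.of_forall fun b => ?_)
    first
    | (rw [hsymm a b]; ring)
    | (rw [hsymm b a]; ring)
    | (simp only [hsymm]; ring)
  -- bound the two pieces
  have hbd1 : |∫ x, ∫ y, ω x * ω y * gf x y * χ x| ≤ κ * m := by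
    have hptw : ∀ x : E2, |∫ y, ω x * ω y * gf x y * χ x|
        ≤ κ * A'.indicator ω x := by
      intro x
      have heqx : (∫ y, ω x * ω y * gf x y * χ x)
          = (ω x * χ x) * ∫ y, ω y * gf x y := by
        rw [← integral_const_mul]
        exact integral_congr_ae (Filter.Eventually.of_forall fun y => by ring)
      rw [heqx, abs_mul]
      rcases em (x ∈ A') with hx | hx
      · have h1 : χ x = 1 := by simp [hχdef, Set.indicator_of_mem hx]
        rw [h1, mul_one, Set.indicator_of_mem hx, abs_of_nonneg (hnn x)]
        calc ω x * |∫ y, ω y * gf x y| ≤ ω x * κ :=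
              mul_le_mul_of_nonneg_left (hcore1 x hx) (hnn x)
          _ = κ * ω x := mul_comm _ _
      · have h1 : χ x = 0 := by simp [hχdef, Set.indicator_of_notMem hx]
        rw [h1, Set.indicator_of_notMem hx]
        simp
    calc |∫ x, ∫ y, ω x * ω y * gf x y * χ x|
        ≤ ∫ x, |∫ y, ω x * ω y * gf x y * χ x| := abs_int _ _
      _ ≤ ∫ x, κ * A'.indicator ω x := by
          refine integral_mono hF1int.integral_prod_left.abs
            ((hIω.indicator measA).const_mul κ) hptw
      _ = κ * ∫ x, A'.indicator ω x := integral_const_mul _ _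
      _ ≤ κ * m := by
          refine mul_le_mul_of_nonneg_left ?_ hκ0
          rw [integral_indicator measA]
          exact hAm
  have hbd2 : |∫ x, ∫ y, ω x * ω y * gf x y * (χ x * χ' y)| ≤ κ * m := by
    have hptw : ∀ x : E2, |∫ y, ω x * ω y * gf x y * (χ x * χ' y)|
        ≤ κ * A'.indicator ω x := by
      intro x
      have heqx : (∫ y, ω x * ω y * gf x y * (χ x * χ' y))
          = (ω x * χ x) * ∫ y, ω y * gf x y * χ' y := by
        rw [← integral_const_mul]
        exact integral_congr_ae (Filter.Eventually.of_forall fun y => by ring)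
      rw [heqx, abs_mul]
      rcases em (x ∈ A') with hx | hx
      · have h1 : χ x = 1 := by simp [hχdef, Set.indicator_of_mem hx]
        rw [h1, mul_one, Set.indicator_of_mem hx, abs_of_nonneg (hnn x)]
        calc ω x * |∫ y, ω y * gf x y * χ' y| ≤ ω x * κ :=
              mul_le_mul_of_nonneg_left (hcore2 x hx) (hnn x)
          _ = κ * ω x := mul_comm _ _
      · have h1 : χ x = 0 := by simp [hχdef, Set.indicator_of_notMem hx]
        rw [h1, Set.indicator_of_notMem hx]
        simp
    calc |∫ x, ∫ y, ω x * ω y * gf x y * (χ x * χ' y)|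
        ≤ ∫ x, |∫ y, ω x * ω y * gf x y * (χ x * χ' y)| := abs_int _ _
      _ ≤ ∫ x, κ * A'.indicator ω x := by
          refine integral_mono hΨint.integral_prod_left.abs
            ((hIω.indicator measA).const_mul κ) hptw
      _ = κ * ∫ x, A'.indicator ω x := integral_const_mul _ _
      _ ≤ κ * m := by
          refine mul_le_mul_of_nonneg_left ?_ hκ0
          rw [integral_indicator measA]
          exact hAm
  -- total
  have htot : |∫ x, ∫ y, ω x * ω y * gf x y| ≤ κ * m + κ * m := by
    rw [hsplit, hswap]
    exact (abs_add_le _ _).trans (add_le_add hbd1 hbd2)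
  have hcoef : κ ≤ 4 * C_W / Real.pi * (1 / (R ^ 3 * h) + 1 / (R ^ 2 * h ^ 2)) * Iq := by
    rw [hκdef]
    refine mul_le_mul_of_nonneg_right ?_ hIq0
    have hdiff : 4 * C_W / Real.pi * (1 / (R ^ 3 * h) + 1 / (R ^ 2 * h ^ 2))
        - (2 * C_W / (Real.pi * h ^ 2 * R ^ 2) + 6 * C_W / (Real.pi * h * R ^ 3))
        = 2 * C_W * (R - h) / (Real.pi * h ^ 2 * R ^ 3) := by
      field_simp
      ring
    have h2 : 0 ≤ 2 * C_W * (R - h) / (Real.pi * h ^ 2 * R ^ 3) := by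
      refine div_nonneg ?_ (by positivity)
      nlinarith
    linarith
  calc |(1/2) * ∫ x, ∫ y, ω x * ω y * gf x y|
      = (1/2) * |∫ x, ∫ y, ω x * ω y * gf x y| := by
        rw [abs_mul]
        norm_num
    _ ≤ (1/2) * (κ * m + κ * m) := by
        refine mul_le_mul_of_nonneg_left htot (by norm_num)
    _ = κ * m := by ring
    _ ≤ 4 * C_W / Real.pi * (1 / (R ^ 3 * h) + 1 / (R ^ 2 * h ^ 2)) * Iq * m :=
        mul_le_mul_of_nonneg_right hcoef hm0
end
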